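/- For every m ∈ ℤ and 0 < ε < 1, the m-th complex Fourier coefficient of the 2π-periodic function u ↦ -(1/(2π)) · ε/(1+ε²+(1-ε²)cos u) equals -(1/(4π)) · ρ_ε^{|m|}, where ρ_ε = (ε-1)/(ε+1). That is, (1/(2π)) ∫_{-π}^{π} [-(1/(2π)) ε/(1+ε²+(1-ε²)cos u)] e^{-imu} du = -(1/(4π)) ((ε-1)/(ε+1))^{|m|}. -/

import Mathlib

open Real MeasureTheory

noncomputable def Faux (ρ : ℝ) (m : ℤ) (k : ℕ) (u : ℝ) : ℂ :=
  ((ρ:ℂ))^k * Complex.exp (Complex.I * (((k:ℤ) - m : ℤ):ℂ) * u)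

noncomputable def Gaux (ρ : ℝ) (m : ℤ) (k : ℕ) (u : ℝ) : ℂ :=
  ((ρ:ℂ))^(k+1) * Complex.exp (Complex.I * (((-(k:ℤ)-1) - m : ℤ):ℂ) * u)

lemma norm_exp_I_int (n : ℤ) (u : ℝ) : ‖Complex.exp (Complex.I * (n:ℂ) * u)‖ = 1 := by
  simp [Complex.norm_exp]

lemma norm_Faux (ρ : ℝ) (m : ℤ) (k : ℕ) (u : ℝ) : ‖Faux ρ m k u‖ = |ρ|^k := by
  rw [Faux, norm_mul, norm_pow, Complex.norm_real, norm_exp_I_int, Real.norm_eq_abs, mul_one]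

lemma norm_Gaux (ρ : ℝ) (m : ℤ) (k : ℕ) (u : ℝ) : ‖Gaux ρ m k u‖ = |ρ|^(k+1) := by
  rw [Gaux, norm_mul, norm_pow, Complex.norm_real, norm_exp_I_int, Real.norm_eq_abs, mul_one]

lemma cont_Faux (ρ : ℝ) (m : ℤ) (k : ℕ) : Continuous (Faux ρ m k) :=
  continuous_const.mul
    (Complex.continuous_exp.comp (continuous_const.mul Complex.continuous_ofReal))

lemma cont_Gaux (ρ : ℝ) (m : ℤ) (k : ℕ) : Continuous (Gaux ρ m k) :=
  continuous_const.mul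
    (Complex.continuous_exp.comp (continuous_const.mul Complex.continuous_ofReal))

lemma int_exp_int (n : ℤ) : (∫ u in (-π)..π, Complex.exp (Complex.I * n * u))
    = if n = 0 then (2*π:ℂ) else 0 := by
  by_cases h : n = 0
  · simp only [h, Int.cast_zero, mul_zero, zero_mul, Complex.exp_zero, if_pos]
    rw [intervalIntegral.integral_const, Complex.real_smul]
    push_cast; ring
  · rw [if_neg h]
    rw [integral_exp_mul_complex (c := Complex.I * n)
      (by simp [Complex.I_ne_zero, Complex.ext_iff, h])]
    have e1 : Complex.I * n * (π:ℝ) = ((n:ℤ):ℂ) * (π * Complex.I) := by push_cast; ring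
    have e2 : Complex.I * n * ((-π:ℝ):ℂ) = ((-n:ℤ):ℂ) * (π * Complex.I) := by push_cast; ring
    rw [e1, e2, Complex.exp_int_mul, Complex.exp_int_mul, Complex.exp_pi_mul_I]
    rw [zpow_neg, div_eq_zero_iff]
    left
    rcases Int.even_or_odd n with hn | hn
    · rw [hn.neg_one_zpow]; norm_num
    · rw [hn.neg_one_zpow]; norm_num

lemma integral_Faux (ρ : ℝ) (m : ℤ) (k : ℕ) : (∫ u in (-π)..π, Faux ρ m k u)
    = (ρ:ℂ)^k * (if ((k:ℤ) - m : ℤ) = 0 then (2*π:ℂ) else 0) := by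
  simp only [Faux]
  rw [intervalIntegral.integral_const_mul, int_exp_int]

lemma integral_Gaux (ρ : ℝ) (m : ℤ) (k : ℕ) : (∫ u in (-π)..π, Gaux ρ m k u)
    = (ρ:ℂ)^(k+1) * (if ((-(k:ℤ)-1) - m : ℤ) = 0 then (2*π:ℂ) else 0) := by
  simp only [Gaux]
  rw [intervalIntegral.integral_const_mul, int_exp_int]

lemma summable_int_Faux (ρ : ℝ) (m : ℤ) :
    Summable fun k : ℕ => ∫ u in (-π)..π, Faux ρ m k u := by
  apply summable_of_ne_finset_zero (s := {m.natAbs})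
  intro k hk
  simp only [Finset.mem_singleton] at hk
  rw [integral_Faux, if_neg, mul_zero]
  omega

lemma summable_int_Gaux (ρ : ℝ) (m : ℤ) :
    Summable fun k : ℕ => ∫ u in (-π)..π, Gaux ρ m k u := by
  apply summable_of_ne_finset_zero (s := {m.natAbs - 1})
  intro k hk
  simp only [Finset.mem_singleton] at hk
  rw [integral_Gaux, if_neg, mul_zero]
  omega

lemma tsum_int_Faux (ρ : ℝ) (m : ℤ) :
    (∑' k : ℕ, ∫ u in (-π)..π, Faux ρ m k u)
    = if 0 ≤ m then 2*π*(ρ:ℂ)^m.natAbs else 0 := by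
  by_cases hm : 0 ≤ m
  · rw [if_pos hm]
    have h : ∀ k : ℕ, (∫ u in (-π)..π, Faux ρ m k u)
        = if k = m.natAbs then 2*π*(ρ:ℂ)^m.natAbs else 0 := by
      intro k
      rw [integral_Faux]
      by_cases hk : ((k:ℤ) - m : ℤ) = 0
      · have : k = m.natAbs := by omega
        rw [if_pos hk, if_pos this, this]; ring
      · have : k ≠ m.natAbs := by omega
        rw [if_neg hk, if_neg this, mul_zero]
    rw [tsum_congr h, tsum_ite_eq]
  · rw [if_neg hm]
    have h : ∀ k : ℕ, (∫ u in (-π)..π, Faux ρ m k u) = 0 := by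
      intro k
      rw [integral_Faux, if_neg (by omega), mul_zero]
    rw [tsum_congr h, tsum_zero]

lemma tsum_int_Gaux (ρ : ℝ) (m : ℤ) :
    (∑' k : ℕ, ∫ u in (-π)..π, Gaux ρ m k u)
    = if 0 ≤ m then 0 else 2*π*(ρ:ℂ)^m.natAbs := by
  by_cases hm : 0 ≤ m
  · rw [if_pos hm]
    have h : ∀ k : ℕ, (∫ u in (-π)..π, Gaux ρ m k u) = 0 := by
      intro k
      rw [integral_Gaux, if_neg (by omega), mul_zero]
    rw [tsum_congr h, tsum_zero]
  · rw [if_neg hm]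
    have h : ∀ k : ℕ, (∫ u in (-π)..π, Gaux ρ m k u)
        = if k = m.natAbs - 1 then 2*π*(ρ:ℂ)^m.natAbs else 0 := by
      intro k
      rw [integral_Gaux]
      by_cases hk : ((-(k:ℤ)-1) - m : ℤ) = 0
      · have h2 : k = m.natAbs - 1 := by omega
        have h3 : k + 1 = m.natAbs := by omega
        rw [if_pos hk, if_pos h2, h3]; ring
      · have : k ≠ m.natAbs - 1 := by omega
        rw [if_neg hk, if_neg this, mul_zero]
    rw [tsum_congr h, tsum_ite_eq]

lemma key_aux (ε : ℝ) (hε : 0 < ε) (hε1 : ε < 1) (m : ℤ) (u : ℝ) :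
    ((-(1 / (2 * π)) * ε / (1 + ε ^ 2 + (1 - ε ^ 2) * Real.cos u) : ℝ) : ℂ) *
        Complex.exp (-Complex.I * m * u)
    = (-(1/(4*π)):ℂ) *
        ∑' k : ℕ, (Faux ((ε-1)/(ε+1)) m k u + Gaux ((ε-1)/(ε+1)) m k u) := by
  have hπ : (π:ℝ) ≠ 0 := Real.pi_ne_zero
  have hπc : ((π:ℝ):ℂ) ≠ 0 := by exact_mod_cast hπ
  set ρ : ℝ := (ε - 1) / (ε + 1) with hρdef
  have hε1' : ε + 1 ≠ 0 := by linarith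
  have hρ1 : -1 < ρ := by rw [hρdef, lt_div_iff₀ (by linarith)]; linarith
  have hρ0 : ρ < 0 := div_neg_of_neg_of_pos (by linarith) (by linarith)
  have hρabs : |ρ| < 1 := abs_lt.2 ⟨hρ1, by linarith⟩
  set x : ℂ := Complex.exp (Complex.I * u) with hxdef
  have hxne : x ≠ 0 := Complex.exp_ne_zero _
  have hxnorm : ‖x‖ = 1 := by
    simp [hxdef, Complex.norm_exp]
  have hxinv : Complex.exp (-(Complex.I * u)) = x⁻¹ := by
    rw [Complex.exp_neg]
  have ha : ‖(ρ:ℂ) * x‖ < 1 := by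
    rw [norm_mul, hxnorm, mul_one, Complex.norm_real]
    exact hρabs
  have hb : ‖(ρ:ℂ) * x⁻¹‖ < 1 := by
    rw [norm_mul, norm_inv, hxnorm, Complex.norm_real]
    simpa using hρabs
  have h1a : 1 - (ρ:ℂ) * x ≠ 0 := by
    intro h
    rw [sub_eq_zero] at h
    rw [← h] at ha
    simp at ha
  have h1b : 1 - (ρ:ℂ) * x⁻¹ ≠ 0 := by
    intro h
    rw [sub_eq_zero] at h
    rw [← h] at hb
    simp at hb
  have h1F : ∀ k : ℕ, Faux ρ m k u = Complex.exp (-Complex.I * m * u) * ((ρ:ℂ) * x)^k := by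
    intro k
    have harg : Complex.I * (((k:ℤ) - m : ℤ):ℂ) * u
        = -Complex.I * m * u + (k:ℕ) * (Complex.I * u) := by push_cast; ring
    rw [Faux, harg, Complex.exp_add, Complex.exp_nat_mul, mul_pow, ← hxdef]
    ring
  have h1G : ∀ k : ℕ, Gaux ρ m k u
      = (Complex.exp (-Complex.I * m * u) * ((ρ:ℂ) * x⁻¹)) * ((ρ:ℂ) * x⁻¹)^k := by
    intro k
    have harg : Complex.I * (((-(k:ℤ)-1) - m : ℤ):ℂ) * u
        = -Complex.I * m * u + (-(Complex.I * u)) + (k:ℕ) * (-(Complex.I * u)) := by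
      push_cast; ring
    rw [Gaux, harg, Complex.exp_add, Complex.exp_add, Complex.exp_nat_mul, hxinv, mul_pow]
    ring
  have hsumF : Summable fun k : ℕ => Faux ρ m k u := by
    rw [summable_congr h1F]
    exact (summable_geometric_of_norm_lt_one ha).mul_left _
  have hsumG : Summable fun k : ℕ => Gaux ρ m k u := by
    rw [summable_congr h1G]
    exact (summable_geometric_of_norm_lt_one hb).mul_left _
  rw [Summable.tsum_add hsumF hsumG]
  have hsF : (∑' k : ℕ, Faux ρ m k u)
      = Complex.exp (-Complex.I * m * u) * (1 - (ρ:ℂ) * x)⁻¹ := by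
    rw [tsum_congr h1F, tsum_mul_left, tsum_geometric_of_norm_lt_one ha]
  have hsG : (∑' k : ℕ, Gaux ρ m k u)
      = Complex.exp (-Complex.I * m * u) * ((ρ:ℂ) * x⁻¹) * (1 - (ρ:ℂ) * x⁻¹)⁻¹ := by
    rw [tsum_congr h1G, tsum_mul_left, tsum_geometric_of_norm_lt_one hb]
  rw [hsF, hsG]
  have hDpos : (0:ℝ) < 1 + ε ^ 2 + (1 - ε ^ 2) * Real.cos u := by
    have h1 : (0:ℝ) ≤ (1 - ε^2) * (1 + Real.cos u) :=
      mul_nonneg (by nlinarith) (by linarith [Real.neg_one_le_cos u])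
    nlinarith [mul_pos hε hε]
  have hD : ((1 + ε ^ 2 + (1 - ε ^ 2) * Real.cos u : ℝ):ℂ) ≠ 0 := by
    exact_mod_cast hDpos.ne'
  have hcos : Complex.cos (u:ℂ) = (x + x⁻¹) / 2 := by
    rw [Complex.cos, show ((u:ℂ) * Complex.I) = Complex.I * u from mul_comm _ _,
      show (-(u:ℂ) * Complex.I) = -(Complex.I * u) by ring, hxinv, ← hxdef]
  have hD' : (1 + (ε:ℂ) ^ 2 + (1 - (ε:ℂ) ^ 2) * ((x + x⁻¹)/2)) ≠ 0 := by
    have := hD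
    push_cast at this
    rwa [hcos] at this
  have hρc : (ρ:ℂ) = ((ε:ℂ) - 1) / ((ε:ℂ) + 1) := by rw [hρdef]; push_cast; ring
  have hε1c : (ε:ℂ) + 1 ≠ 0 := by
    intro h
    have : ε + 1 = 0 := by exact_mod_cast congrArg Complex.re h
    exact hε1' this
  have h1a' : ((ε:ℂ) + 1) - ((ε:ℂ) - 1) * x ≠ 0 := by
    intro h
    apply h1a
    rw [hρc, show (1 : ℂ) - ((ε:ℂ)-1)/((ε:ℂ)+1)*x = (((ε:ℂ)+1) - ((ε:ℂ)-1)*x)/((ε:ℂ)+1) by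
      field_simp, h, zero_div]
  have h1b' : ((ε:ℂ) + 1) * x - ((ε:ℂ) - 1) ≠ 0 := by
    intro h
    apply h1b
    rw [hρc, show (1 : ℂ) - ((ε:ℂ)-1)/((ε:ℂ)+1)*x⁻¹ = (((ε:ℂ)+1)*x - ((ε:ℂ)-1))/(((ε:ℂ)+1)*x) by
      field_simp, h, zero_div]
  have hsum : (1 - (ρ:ℂ)*x)⁻¹ + (ρ:ℂ)*x⁻¹*(1 - (ρ:ℂ)*x⁻¹)⁻¹
      = 2*(ε:ℂ)/(1 + (ε:ℂ)^2 + (1-(ε:ℂ)^2)*((x+x⁻¹)/2)) := by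
    rw [hρc]
    rw [eq_div_iff hD']
    field_simp
    ring
  have hfac : Complex.exp (-Complex.I*(m:ℂ)*(u:ℝ)) * (1-(ρ:ℂ)*x)⁻¹
        + Complex.exp (-Complex.I*(m:ℂ)*(u:ℝ)) * ((ρ:ℂ)*x⁻¹) * (1-(ρ:ℂ)*x⁻¹)⁻¹
      = Complex.exp (-Complex.I*(m:ℂ)*(u:ℝ)) *
        ((1 - (ρ:ℂ)*x)⁻¹ + (ρ:ℂ)*x⁻¹*(1 - (ρ:ℂ)*x⁻¹)⁻¹) := by ring
  rw [hfac, hsum]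
  push_cast
  rw [hcos]
  rw [div_mul_eq_mul_div, mul_div_assoc]
  rw [mul_div_assoc' (Complex.exp (-Complex.I * (m:ℂ) * (u:ℝ))) (2*(ε:ℂ)),
    mul_div_assoc' (-(1 / (4 * (π:ℂ))))]
  rw [← mul_div_assoc (-(1 / (2 * (π:ℂ))) * ε)]
  rw [div_eq_div_iff hD' hD']
  ring

lemma swap_aux (ρ : ℝ) (hρ : |ρ| < 1) (m : ℤ) :
    (∫ u in (-π)..π, ∑' k : ℕ, (Faux ρ m k u + Gaux ρ m k u))
    = ∑' k : ℕ, ∫ u in (-π)..π, (Faux ρ m k u + Gaux ρ m k u) := by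
  have hle : (-π:ℝ) ≤ π := by linarith [Real.pi_pos]
  rw [intervalIntegral.integral_of_le hle]
  have hrw : ∀ k : ℕ, (∫ u in (-π)..π, (Faux ρ m k u + Gaux ρ m k u))
      = ∫ u in Set.Ioc (-π) π, (Faux ρ m k u + Gaux ρ m k u) := fun k =>
    intervalIntegral.integral_of_le hle
  rw [tsum_congr hrw]
  refine (MeasureTheory.integral_tsum_of_summable_integral_norm (fun k => ?_) ?_).symm
  · exact ((cont_Faux ρ m k).add (cont_Gaux ρ m k)).integrableOn_Ioc
  · apply Summable.of_nonneg_of_le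
      (fun k => integral_nonneg (fun u => norm_nonneg _))
      (fun k => ?_)
      ((summable_geometric_of_lt_one (abs_nonneg ρ) hρ).mul_right (4*π))
    have hptw : ∀ u : ℝ, ‖Faux ρ m k u + Gaux ρ m k u‖ ≤ 2 * |ρ|^k := by
      intro u
      calc ‖Faux ρ m k u + Gaux ρ m k u‖ ≤ ‖Faux ρ m k u‖ + ‖Gaux ρ m k u‖ := norm_add_le _ _
        _ = |ρ|^k + |ρ|^(k+1) := by rw [norm_Faux, norm_Gaux]
        _ ≤ |ρ|^k + |ρ|^k := by
            have := pow_le_pow_of_le_one (abs_nonneg ρ) hρ.le (Nat.le_succ k)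
            rw [Nat.succ_eq_add_one] at this
            linarith
        _ = 2 * |ρ|^k := by ring
    calc (∫ u in Set.Ioc (-π) π, ‖Faux ρ m k u + Gaux ρ m k u‖)
        ≤ ∫ _u in Set.Ioc (-π) π, 2 * |ρ|^k := by
          apply integral_mono
          · exact ((cont_Faux ρ m k).add (cont_Gaux ρ m k)).norm.integrableOn_Ioc
          · exact integrableOn_const measure_Ioc_lt_top.ne
          · exact fun u => hptw u
      _ = (2*π) * (2 * |ρ|^k) := by
          rw [setIntegral_const, measureReal_def, Real.volume_Ioc, smul_eq_mul,
            ENNReal.toReal_ofReal (by linarith [Real.pi_pos])]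
          ring
      _ = |ρ|^k * (4*π) := by ring

/-- The `m`-th complex Fourier coefficient of
`u ↦ -(1/(2π)) ε/(1+ε²+(1-ε²)cos u)` equals `-(1/(4π)) ρ_ε^{|m|}`
with `ρ_ε = (ε-1)/(ε+1)`. -/
theorem stmt_2 (ε : ℝ) (hε : 0 < ε) (hε1 : ε < 1) (m : ℤ) :
    (1 / (2 * π) : ℂ) *
      ∫ u in (-π)..π,
        ((-(1 / (2 * π)) * ε / (1 + ε ^ 2 + (1 - ε ^ 2) * Real.cos u) : ℝ) : ℂ) *
          Complex.exp (-Complex.I * m * u)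
    = -(1 / (4 * π)) * (((ε - 1) / (ε + 1) : ℝ) : ℂ) ^ m.natAbs := by
  have hπ : (π:ℝ) ≠ 0 := Real.pi_ne_zero
  have hπc : ((π:ℝ):ℂ) ≠ 0 := by exact_mod_cast hπ
  set ρ : ℝ := (ε - 1) / (ε + 1) with hρdef
  have hε1' : ε + 1 ≠ 0 := by linarith
  have hρ1 : -1 < ρ := by rw [hρdef, lt_div_iff₀ (by linarith)]; linarith
  have hρ0 : ρ < 0 := div_neg_of_neg_of_pos (by linarith) (by linarith)
  have hρabs : |ρ| < 1 := abs_lt.2 ⟨hρ1, by linarith⟩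
  calc (1 / (2 * π) : ℂ) * ∫ u in (-π)..π,
        ((-(1 / (2 * π)) * ε / (1 + ε ^ 2 + (1 - ε ^ 2) * Real.cos u) : ℝ) : ℂ) *
          Complex.exp (-Complex.I * m * u)
      = (1 / (2 * π) : ℂ) * ∫ u in (-π)..π,
          (-(1/(4*π)):ℂ) * ∑' k : ℕ, (Faux ρ m k u + Gaux ρ m k u) := by
        rw [intervalIntegral.integral_congr (fun u _ => key_aux ε hε hε1 m u)]
    _ = (1 / (2 * π) : ℂ) * ((-(1/(4*π)):ℂ) *
          ∫ u in (-π)..π, ∑' k : ℕ, (Faux ρ m k u + Gaux ρ m k u)) := by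
        rw [intervalIntegral.integral_const_mul]
    _ = (1 / (2 * π) : ℂ) * ((-(1/(4*π)):ℂ) *
          ((∑' k : ℕ, ∫ u in (-π)..π, Faux ρ m k u)
            + ∑' k : ℕ, ∫ u in (-π)..π, Gaux ρ m k u)) := by
        rw [swap_aux ρ hρabs m]
        congr 2
        rw [← Summable.tsum_add (summable_int_Faux ρ m) (summable_int_Gaux ρ m)]
        exact tsum_congr fun k => intervalIntegral.integral_add
          ((cont_Faux ρ m k).intervalIntegrable _ _) ((cont_Gaux ρ m k).intervalIntegrable _ _)
    _ = -(1 / (4 * π)) * (((ε - 1) / (ε + 1) : ℝ) : ℂ) ^ m.natAbs := by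
        rw [tsum_int_Faux, tsum_int_Gaux, ← hρdef]
        by_cases hm : 0 ≤ m
        · rw [if_pos hm, if_pos hm]
          field_simp
          ring
        · rw [if_neg hm, if_neg hm]
          field_simp
          ring
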